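/- For every invertible real d×d matrix A and nonzero u ∈ ℝ^d, one has d_P(overline{A*u}, ῡ₊(A*)) · δ_P(ū, ῡ₊(A)) ≤ γ₁₂(A), where d_P(ū, v̄) = ‖u ∧ v‖/(‖u‖‖v‖) is the projective distance, δ_P(ū, v̄) = |⟨u,v⟩|/(‖u‖‖v‖), ῡ₊(A) is the top singular direction in the image of A, and γ₁₂(A) = σ₂(A)/σ₁(A). -/

import Mathlib

open Matrix

/-- The continuous linear map on Euclidean space induced by a matrix. -/
noncomputable def euc {d : ℕ} (A : Matrix (Fin d) (Fin d) ℝ) :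
    EuclideanSpace ℝ (Fin d) →L[ℝ] EuclideanSpace ℝ (Fin d) :=
  Matrix.toEuclideanCLM (𝕜 := ℝ) A

/-- The projective quantity `δ_P(ū, v̄) = |⟨u,v⟩| / (‖u‖‖v‖)`. -/
noncomputable def deltaP {d : ℕ} (u v : EuclideanSpace ℝ (Fin d)) : ℝ :=
  |(inner ℝ u v : ℝ)| / (‖u‖ * ‖v‖)

/-- The projective distance `d_P(ū, v̄) = ‖u ∧ v‖ / (‖u‖‖v‖)`, expressed via
`‖u ∧ v‖² = ‖u‖²‖v‖² − ⟨u,v⟩²`. -/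
noncomputable def dP {d : ℕ} (u v : EuclideanSpace ℝ (Fin d)) : ℝ :=
  Real.sqrt (‖u‖ ^ 2 * ‖v‖ ^ 2 - (inner ℝ u v : ℝ) ^ 2) / (‖u‖ * ‖v‖)


lemma euc_apply' {d : ℕ} (A : Matrix (Fin d) (Fin d) ℝ) (x : EuclideanSpace ℝ (Fin d)) (i : Fin d) :
    euc A x i = ∑ j, A i j * x j := rfl

lemma euc_diag {d : ℕ} (s : Fin d → ℝ) (x : EuclideanSpace ℝ (Fin d)) (i : Fin d) :
    euc (Matrix.diagonal s) x i = s i * x i := by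
  rw [euc_apply']
  simp [Matrix.diagonal_apply, ite_mul]

lemma euc_mul' {d : ℕ} (A B : Matrix (Fin d) (Fin d) ℝ) (x : EuclideanSpace ℝ (Fin d)) :
    euc (A * B) x = euc A (euc B x) := by simp [euc, _root_.map_mul]

lemma euc_adj {d : ℕ} (M : Matrix (Fin d) (Fin d) ℝ) (x y : EuclideanSpace ℝ (Fin d)) :
    (inner ℝ (euc M x) y : ℝ) = inner ℝ x (euc Mᵀ y) := by
  rw [euc, ← ContinuousLinearMap.adjoint_inner_right, euc,
    ← ContinuousLinearMap.star_eq_adjoint, ← map_star]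
  simp [Matrix.star_eq_conjTranspose]

lemma euc_inner {d : ℕ} (M : Matrix (Fin d) (Fin d) ℝ) (hM : Mᵀ * M = 1)
    (x y : EuclideanSpace ℝ (Fin d)) :
    (inner ℝ (euc M x) (euc M y) : ℝ) = inner ℝ x y := by
  rw [euc_adj, ← euc_mul', hM]
  simp [euc, _root_.map_one]

lemma euc_norm {d : ℕ} (M : Matrix (Fin d) (Fin d) ℝ) (hM : Mᵀ * M = 1)
    (x : EuclideanSpace ℝ (Fin d)) : ‖euc M x‖ = ‖x‖ := by
  have h := euc_inner M hM x x
  rw [real_inner_self_eq_norm_sq, real_inner_self_eq_norm_sq] at h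
  nlinarith [norm_nonneg (euc M x), norm_nonneg x]

lemma norm_sq_eq {d : ℕ} (v : EuclideanSpace ℝ (Fin d)) : ‖v‖^2 = ∑ i, (v i)^2 := by
  rw [← real_inner_self_eq_norm_sq, PiLp.inner_apply]
  simp [sq]

/-- for `A = K D L` a singular value decomposition of an invertible matrix
and any nonzero `u`, with `ῡ₊(A) = K e₀` and `ῡ₊(A*) = Lᵀ e₀`:
`d_P(overline{A*u}, ῡ₊(A*)) · δ_P(ū, ῡ₊(A)) ≤ γ₁₂(A) = σ₂/σ₁`. -/
theorem stmt7 {d : ℕ} (hd : 2 ≤ d) (K L A : Matrix (Fin d) (Fin d) ℝ)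
    (hK : K * Kᵀ = 1) (hL : L * Lᵀ = 1)
    (s : Fin d → ℝ) (hpos : ∀ i, 0 < s i) (hanti : Antitone s)
    (hA : A = K * Matrix.diagonal s * L)
    (u : EuclideanSpace ℝ (Fin d)) (hu : u ≠ 0) :
    dP (euc Aᵀ u) (euc Lᵀ (EuclideanSpace.single ⟨0, by omega⟩ 1)) *
        deltaP u (euc K (EuclideanSpace.single ⟨0, by omega⟩ 1)) ≤
      s ⟨1, by omega⟩ / s ⟨0, by omega⟩ := by
  set z0 : Fin d := ⟨0, by omega⟩ with hz0
  set z1 : Fin d := ⟨1, by omega⟩ with hz1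
  have hK' : Kᵀ * K = 1 := mul_eq_one_comm.mp hK
  have hL' : Lᵀ * L = 1 := mul_eq_one_comm.mp hL
  have hKt : (Kᵀ)ᵀ * Kᵀ = 1 := by rw [transpose_transpose]; exact hK
  have hLt : (Lᵀ)ᵀ * Lᵀ = 1 := by rw [transpose_transpose]; exact hL
  set e0 : EuclideanSpace ℝ (Fin d) := EuclideanSpace.single z0 1 with he0
  set v : EuclideanSpace ℝ (Fin d) := euc Kᵀ u with hv
  set w : EuclideanSpace ℝ (Fin d) := euc (Matrix.diagonal s) v with hw
  have hAT : euc Aᵀ u = euc Lᵀ w := by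
    rw [hA]
    simp only [Matrix.transpose_mul, Matrix.diagonal_transpose]
    rw [← Matrix.mul_assoc, euc_mul', euc_mul']
  -- norms
  have hne0 : ‖e0‖ = 1 := by rw [he0, EuclideanSpace.norm_single]; norm_num
  have hVu : ‖v‖ = ‖u‖ := euc_norm Kᵀ hKt u
  have hupos : (0:ℝ) < ‖u‖ := norm_pos_iff.mpr hu
  have hVpos : (0:ℝ) < ‖v‖ := hVu ▸ hupos
  -- first factor
  have hinner_w : (inner ℝ w e0 : ℝ) = s z0 * v z0 := by
    rw [he0, EuclideanSpace.inner_single_right]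
    simp [hw, euc_diag]
  have hdP : dP (euc Aᵀ u) (euc Lᵀ e0) =
      Real.sqrt (‖w‖^2 - (s z0 * v z0)^2) / ‖w‖ := by
    rw [hAT, dP, euc_inner Lᵀ hLt, euc_norm Lᵀ hLt, euc_norm Lᵀ hLt, hinner_w, hne0]
    ring_nf
  -- second factor
  have hinner_u : (inner ℝ u (euc K e0) : ℝ) = v z0 := by
    rw [real_inner_comm, euc_adj, ← hv, real_inner_comm, he0,
      EuclideanSpace.inner_single_right]
    simp
  have hdelta : deltaP u (euc K e0) = |v z0| / ‖v‖ := by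
    rw [deltaP, hinner_u, euc_norm K hK', hne0, mul_one, hVu]
  rw [hdP, hdelta]
  -- sums
  have hW2 : ‖w‖^2 = ∑ i, (s i * v i)^2 := by
    rw [norm_sq_eq]
    exact Finset.sum_congr rfl fun i _ => by rw [hw, euc_diag]
  have hV2 : ‖v‖^2 = ∑ i, (v i)^2 := norm_sq_eq v
  have hWpos : (0:ℝ) < ‖w‖ := by
    have hvne : v ≠ 0 := by
      intro h; rw [h, norm_zero] at hVpos; exact lt_irrefl _ hVpos
    have : ∃ i, v i ≠ 0 := by
      by_contra h; push_neg at h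
      exact hvne (by ext i; simp [h i])
    obtain ⟨i, hi⟩ := this
    have h1 : (0:ℝ) < (s i * v i)^2 :=
      (sq_nonneg _).lt_of_ne (Ne.symm (pow_ne_zero 2 (mul_ne_zero (hpos i).ne' hi)))
    have h2 : (s i * v i)^2 ≤ ‖w‖^2 := by
      rw [hW2]
      exact Finset.single_le_sum (fun j _ => sq_nonneg (s j * v j)) (Finset.mem_univ i)
    nlinarith [norm_nonneg w]
  -- key term bounds
  have hterm0 : (s z0 * v z0)^2 ≤ ‖w‖^2 := by
    rw [hW2]
    exact Finset.single_le_sum (fun j _ => sq_nonneg (s j * v j)) (Finset.mem_univ z0)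
  have hterm0' : (v z0)^2 ≤ ‖v‖^2 := by
    rw [hV2]
    exact Finset.single_le_sum (fun j _ => sq_nonneg (v j)) (Finset.mem_univ z0)
  have h2 : s z0 * |v z0| ≤ ‖w‖ := by
    have := Real.sqrt_le_sqrt hterm0
    rwa [Real.sqrt_sq_eq_abs, Real.sqrt_sq (norm_nonneg w), abs_mul,
      abs_of_pos (hpos z0)] at this
  set r : ℝ := Real.sqrt (‖v‖^2 - (v z0)^2) with hr
  have hrnn : 0 ≤ r := Real.sqrt_nonneg _
  have hr2 : r^2 = ‖v‖^2 - (v z0)^2 := Real.sq_sqrt (by linarith)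
  have h3 : r ≤ ‖v‖ := by
    nlinarith [hr2, hrnn, norm_nonneg v, sq_nonneg (v z0)]
  have hTle : ‖w‖^2 - (s z0 * v z0)^2 ≤ (s z1)^2 * (‖v‖^2 - (v z0)^2) := by
    have hsum : ‖w‖^2 - (s z0 * v z0)^2 = ∑ i ∈ Finset.univ.erase z0, (s i * v i)^2 := by
      rw [hW2, ← Finset.add_sum_erase Finset.univ (fun i => (s i * v i)^2) (Finset.mem_univ z0)]; ring
    have hsum' : ‖v‖^2 - (v z0)^2 = ∑ i ∈ Finset.univ.erase z0, (v i)^2 := by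
      rw [hV2, ← Finset.add_sum_erase Finset.univ (fun i => (v i)^2) (Finset.mem_univ z0)]; ring
    rw [hsum, hsum', Finset.mul_sum]
    apply Finset.sum_le_sum
    intro i hi
    have hiz : z1 ≤ i := by
      have h0 : i.val ≠ 0 := by
        simpa [hz0, Fin.ext_iff] using Finset.ne_of_mem_erase hi
      rw [Fin.le_def, hz1]
      show (1:ℕ) ≤ i.val
      omega
    have hsle : s i ≤ s z1 := hanti hiz
    rw [mul_pow]
    exact mul_le_mul_of_nonneg_right (pow_le_pow_left₀ (hpos i).le hsle 2) (sq_nonneg (v i))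
  have h1 : Real.sqrt (‖w‖^2 - (s z0 * v z0)^2) ≤ s z1 * r := by
    have : ‖w‖^2 - (s z0 * v z0)^2 ≤ (s z1 * r)^2 := by
      rw [mul_pow (s z1) r 2, hr2]; exact hTle
    calc Real.sqrt (‖w‖^2 - (s z0 * v z0)^2) ≤ Real.sqrt ((s z1 * r)^2) :=
          Real.sqrt_le_sqrt this
      _ = s z1 * r := Real.sqrt_sq (mul_nonneg (hpos z1).le hrnn)
  -- finish
  rw [div_mul_div_comm, div_le_div_iff₀ (mul_pos hWpos hVpos) (hpos z0)]
  have hsq : 0 ≤ Real.sqrt (‖w‖^2 - (s z0 * v z0)^2) := Real.sqrt_nonneg _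
  calc Real.sqrt (‖w‖^2 - (s z0 * v z0)^2) * |v z0| * s z0
      ≤ (s z1 * r) * |v z0| * s z0 := by
        apply mul_le_mul_of_nonneg_right (mul_le_mul_of_nonneg_right h1 (abs_nonneg _)) (hpos z0).le
    _ = (s z1 * r) * (s z0 * |v z0|) := by ring
    _ ≤ (s z1 * ‖v‖) * ‖w‖ := by
        apply mul_le_mul (mul_le_mul_of_nonneg_left h3 (hpos z1).le) h2 (mul_nonneg (hpos z0).le (abs_nonneg _)) (mul_nonneg (hpos z1).le (norm_nonneg _))
    _ = s z1 * (‖w‖ * ‖v‖) := by ring
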